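/- Let l₁, …, l_k ∈ ℝ be ℤ-independent and let V ⊆ ℝ be a ℚ-linear subspace of ℝ (viewed as a vector space over ℚ) such that ℝ is the direct sum of span_ℚ{l₁, …, l_k} and V. Then for every group homomorphism ψ : (ℝ, +) → 𝕋, all nonzero rational numbers q₁, …, q_k, and all s₁, …, s_k ∈ 𝕋, there exists a group homomorphism ψ' : (ℝ, +) → 𝕋 such that ψ'(l_i / q_i) = s_i for all 1 ≤ i ≤ k and ψ'(v) = ψ(v) for all v ∈ V. -/

import Mathlib

/-- Let `l₁, …, l_k ∈ ℝ` be ℤ-independent (i.e. ℚ-linearly independent) and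
let `V` be a ℚ-linear subspace of `ℝ` complementary to `span_ℚ {l₁, …, l_k}`.  Then for every
(not necessarily continuous) group homomorphism `ψ : (ℝ, +) → 𝕋`, all nonzero rationals
`q₁, …, q_k` and all `s₁, …, s_k ∈ 𝕋`, there is a homomorphism `ψ' : (ℝ, +) → 𝕋` with
`ψ' (l_i / q_i) = s_i` for all `i` and `ψ' = ψ` on `V`. -/
theorem statement5 {k : ℕ} (l : Fin k → ℝ) (hl : LinearIndependent ℚ l)
    (V : Submodule ℚ ℝ) (hV : IsCompl (Submodule.span ℚ (Set.range l)) V)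
    (ψ : AddChar ℝ Circle) (q : Fin k → ℚ) (hq : ∀ i, q i ≠ 0) (s : Fin k → Circle) :
    ∃ ψ' : AddChar ℝ Circle,
      (∀ i, ψ' (l i / (q i : ℝ)) = s i) ∧ ∀ v ∈ V, ψ' v = ψ v := by
  classical
  set p := Submodule.span ℚ (Set.range l)
  let b : Module.Basis (Fin k) ℚ p := Module.Basis.span hl
  let π₁ : ℝ →ₗ[ℚ] p := Submodule.linearProjOfIsCompl p V hV
  let c : Fin k → (ℝ →ₗ[ℚ] ℚ) := fun i => (b.coord i).comp π₁
  let θ : Fin k → ℝ := fun i =>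
    Complex.arg ((s i * (ψ (l i / (q i : ℝ)))⁻¹ : Circle) : ℂ)
  have hθ : ∀ i, Circle.exp (θ i) = s i * (ψ (l i / (q i : ℝ)))⁻¹ := fun i =>
    Circle.exp_arg _
  refine ⟨{ toFun := fun x => ψ x * ∏ i, Circle.exp ((c i x : ℝ) * (q i : ℝ) * θ i)
            map_zero_eq_one' := by simp
            map_add_eq_mul' := by
              intro x y
              simp only [map_add]
              rw [AddChar.map_add_eq_mul, mul_mul_mul_comm, ← Finset.prod_mul_distrib]
              congr 1
              refine Finset.prod_congr rfl fun j _ => ?_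
              rw [← Circle.exp_add]
              congr 1
              push_cast
              ring }, ?_, ?_⟩
  · intro i
    have hbx : ((((q i)⁻¹ : ℚ) • b i : p) : ℝ) = l i / (q i : ℝ) := by
      have hb : (b i : ℝ) = l i := congrArg Subtype.val (Module.Basis.span_apply hl i)
      rw [Submodule.coe_smul, hb, Rat.smul_def]
      push_cast
      rw [div_eq_inv_mul]
    have hproj : π₁ (l i / (q i : ℝ)) = ((q i)⁻¹ : ℚ) • b i := by
      rw [← hbx]
      exact Submodule.linearProjOfIsCompl_apply_left hV _
    have hc : ∀ j, c j (l i / (q i : ℝ)) = if i = j then (q i)⁻¹ else 0 := by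
      intro j
      simp only [c, LinearMap.comp_apply, hproj]
      rw [map_smul, Module.Basis.coord_apply, Module.Basis.repr_self, smul_eq_mul,
        Finsupp.single_apply]
      split <;> simp
    show ψ _ * _ = s i
    have : ∀ j, Circle.exp ((c j (l i / (q i : ℝ)) : ℝ) * (q j : ℝ) * θ j)
        = if i = j then s i * (ψ (l i / (q i : ℝ)))⁻¹ else 1 := by
      intro j
      rw [hc j]
      split_ifs with h
      · subst h
        rw [← hθ i]
        congr 1
        push_cast
        field_simp
        rw [mul_div_cancel_left₀ _ (show ((q i):ℝ) ≠ 0 by exact_mod_cast hq i)]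
      · simp
    rw [Finset.prod_congr rfl (fun j _ => this j), Finset.prod_ite_eq,
      if_pos (Finset.mem_univ i), mul_comm (s i), mul_inv_cancel_left]
  · intro v hv
    show ψ v * _ = ψ v
    have hproj : π₁ v = 0 := Submodule.linearProjOfIsCompl_apply_right' hV hv
    have hc : ∀ j, c j v = 0 := by
      intro j
      simp [c, hproj]
    simp [hc]
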